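/- Let f_1, f_2 be random variables (encoder outputs), and s_{3k-1}, s_{3k}, s_{3k+1}, s_{3k+2} be sources with the Markov property s_{3k-1} → s_{3k} → s_{3k+1} → s_{3k+2}. Suppose H(s_{3k+2} | f_1, f_2, s_{3k-1}) ≤ nε and H(s_{3k+1} | f_1, s_{3k}) ≤ nε. Then H(f_1, f_2) ≥ H(s_{3k+2} | s_{3k-1}) + H(s_{3k+1} | s_{3k+2}, s_{3k}) − 2nε. -/

import Mathlib

open Finset

variable {Ω : Type} [Fintype Ω]

/-- Probability that the random variable `X` takes value `x`, under weights `μ`. -/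
noncomputable def pr (μ : Ω → ℝ) {α : Type} [Fintype α] [DecidableEq α]
    (X : Ω → α) (x : α) : ℝ :=
  ∑ ω, if X ω = x then μ ω else 0

/-- Shannon entropy (base 2) of the random variable `X`. -/
noncomputable def ent (μ : Ω → ℝ) {α : Type} [Fintype α] [DecidableEq α]
    (X : Ω → α) : ℝ :=
  -∑ x, pr μ X x * Real.logb 2 (pr μ X x)

/-- Conditional Shannon entropy `H(X | Y) = H(X, Y) - H(Y)`. -/
noncomputable def centr (μ : Ω → ℝ) {α β : Type} [Fintype α] [DecidableEq α]
    [Fintype β] [DecidableEq β] (X : Ω → α) (Y : Ω → β) : ℝ :=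
  ent μ (fun ω => (X ω, Y ω)) - ent μ Y

/-- Conditional mutual information `I(X ; Y | Z) = H(X|Z) + H(Y|Z) - H(X,Y|Z)`. -/
noncomputable def mi (μ : Ω → ℝ) {α β γ : Type} [Fintype α] [DecidableEq α]
    [Fintype β] [DecidableEq β] [Fintype γ] [DecidableEq γ]
    (X : Ω → α) (Y : Ω → β) (Z : Ω → γ) : ℝ :=
  centr μ X Z + centr μ Y Z - centr μ (fun ω => (X ω, Y ω)) Z

/-- `μ` is a probability mass function on `Ω`. -/
structure IsPMF (μ : Ω → ℝ) : Prop where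
  nonneg : ∀ ω, 0 ≤ μ ω
  sum_one : ∑ ω, μ ω = 1

variable {μ : Ω → ℝ} {α β γ : Type} [Fintype α] [DecidableEq α]
  [Fintype β] [DecidableEq β] [Fintype γ] [DecidableEq γ]

lemma pr_nonneg (hμ : IsPMF μ) (X : Ω → α) (x : α) : 0 ≤ pr μ X x := by
  refine Finset.sum_nonneg fun ω _ => ?_
  split <;> simp [hμ.nonneg ω]

lemma sum_pr (hμ : IsPMF μ) (X : Ω → α) : ∑ x, pr μ X x = 1 := by
  rw [← hμ.sum_one]
  unfold pr
  rw [Finset.sum_comm]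
  refine Finset.sum_congr rfl fun ω _ => ?_
  simp

lemma pr_comp (T : Ω → α) (g : α → β) (v : β) :
    pr μ (fun ω => g (T ω)) v = ∑ t, if g t = v then pr μ T t else 0 := by
  symm
  calc ∑ t, (if g t = v then pr μ T t else 0)
      = ∑ t, ∑ ω, (if g t = v then (if T ω = t then μ ω else 0) else 0) := by
        refine Finset.sum_congr rfl fun t _ => ?_
        unfold pr; split <;> simp
    _ = ∑ ω, ∑ t, (if g t = v then (if T ω = t then μ ω else 0) else 0) :=
        Finset.sum_comm
    _ = ∑ ω, (if g (T ω) = v then μ ω else 0) := by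
        refine Finset.sum_congr rfl fun ω _ => ?_
        rw [Finset.sum_eq_single (T ω)]
        · simp
        · intro t _ ht; simp [Ne.symm ht]
        · simp
    _ = pr μ (fun ω => g (T ω)) v := rfl

lemma pr_comp_inj {g : α → β} (hg : Function.Injective g) (T : Ω → α) (t : α) :
    pr μ (fun ω => g (T ω)) (g t) = pr μ T t := by
  rw [pr_comp T g (g t), Finset.sum_eq_single t]
  · simp
  · intro t' _ ht'
    exact if_neg fun h => ht' (hg h)
  · intro h; exact absurd (Finset.mem_univ t) h

lemma pr_le_pr_comp (hμ : IsPMF μ) (T : Ω → α) (g : α → β) (t : α) :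
    pr μ T t ≤ pr μ (fun ω => g (T ω)) (g t) := by
  rw [pr_comp T g (g t)]
  have := Finset.single_le_sum
    (f := fun t' => if g t' = g t then pr μ T t' else 0)
    (fun i _ => by split <;> [exact pr_nonneg hμ T i; exact le_rfl])
    (Finset.mem_univ t)
  simpa using this

lemma ent_comp_eq (T : Ω → α) (g : α → β) :
    ent μ (fun ω => g (T ω))
      = -∑ t, pr μ T t * Real.logb 2 (pr μ (fun ω => g (T ω)) (g t)) := by
  unfold ent
  congr 1
  calc ∑ v, pr μ (fun ω => g (T ω)) v * Real.logb 2 (pr μ (fun ω => g (T ω)) v)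
      = ∑ v, ∑ t, (if g t = v then
          pr μ T t * Real.logb 2 (pr μ (fun ω => g (T ω)) v) else 0) := by
        refine Finset.sum_congr rfl fun v _ => ?_
        rw [pr_comp T g v, Finset.sum_mul]
        refine Finset.sum_congr rfl fun t _ => ?_
        split <;> simp
    _ = ∑ t, ∑ v, (if g t = v then
          pr μ T t * Real.logb 2 (pr μ (fun ω => g (T ω)) v) else 0) :=
        Finset.sum_comm
    _ = ∑ t, pr μ T t * Real.logb 2 (pr μ (fun ω => g (T ω)) (g t)) := by
        refine Finset.sum_congr rfl fun t _ => ?_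
        simp

lemma ent_comp_inj (T : Ω → α) {g : α → β} (hg : Function.Injective g) :
    ent μ (fun ω => g (T ω)) = ent μ T := by
  rw [ent_comp_eq]
  unfold ent
  congr 1
  refine Finset.sum_congr rfl fun t _ => ?_
  rw [pr_comp_inj hg]

lemma ent_pair_assoc (X : Ω → α) (Y : Ω → β) (Z : Ω → γ) :
    ent μ (fun ω => ((X ω, Y ω), Z ω)) = ent μ (fun ω => (X ω, Y ω, Z ω)) :=
  ent_comp_inj (fun ω => (X ω, (Y ω, Z ω)))
    (g := fun t => ((t.1, t.2.1), t.2.2))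
    (by intro q q' h; simp only [Prod.ext_iff] at h ⊢; tauto)

lemma chain (X : Ω → α) (Y : Ω → β) (Z : Ω → γ) :
    centr μ (fun ω => (X ω, Y ω)) Z
      = centr μ X (fun ω => (Y ω, Z ω)) + centr μ Y Z := by
  have h := ent_pair_assoc (μ := μ) X Y Z
  simp only [centr]
  rw [h]
  ring

lemma centr_comp_left {α' : Type} [Fintype α'] [DecidableEq α']
    {g : α → α'} (hg : Function.Injective g) (X : Ω → α) (W : Ω → β) :
    centr μ (fun ω => g (X ω)) W = centr μ X W := by
  unfold centr
  have h : ent μ (fun ω => (g (X ω), W ω)) = ent μ (fun ω => (X ω, W ω)) :=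
    ent_comp_inj (fun ω => (X ω, W ω)) (g := fun p => (g p.1, p.2))
      (by intro q q' h; simp only [Prod.ext_iff] at h ⊢;
          exact ⟨hg h.1, h.2⟩)
  rw [h]

lemma centr_comp_right {β' : Type} [Fintype β'] [DecidableEq β']
    {e : β → β'} (he : Function.Injective e) (X : Ω → α) (W : Ω → β) :
    centr μ X (fun ω => e (W ω)) = centr μ X W := by
  unfold centr
  have h1 : ent μ (fun ω => e (W ω)) = ent μ W := ent_comp_inj W he
  have h2 : ent μ (fun ω => (X ω, e (W ω))) = ent μ (fun ω => (X ω, W ω)) :=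
    ent_comp_inj (fun ω => (X ω, W ω)) (g := fun p => (p.1, e p.2))
      (by intro q q' h; simp only [Prod.ext_iff] at h ⊢;
          exact ⟨h.1, he h.2⟩)
  rw [h1, h2]

lemma centr_nonneg (hμ : IsPMF μ) (X : Ω → α) (Y : Ω → β) :
    0 ≤ centr μ X Y := by
  unfold centr
  have hY : ent μ Y = -∑ t : α × β, pr μ (fun ω => (X ω, Y ω)) t *
      Real.logb 2 (pr μ Y t.2) :=
    ent_comp_eq (fun ω => (X ω, Y ω)) Prod.snd
  have hXY : ent μ (fun ω => (X ω, Y ω)) = -∑ t : α × β,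
      pr μ (fun ω => (X ω, Y ω)) t *
      Real.logb 2 (pr μ (fun ω => (X ω, Y ω)) t) := rfl
  rw [hY, hXY]
  rw [show -∑ t : α × β, pr μ (fun ω => (X ω, Y ω)) t *
        Real.logb 2 (pr μ (fun ω => (X ω, Y ω)) t) -
      -∑ t : α × β, pr μ (fun ω => (X ω, Y ω)) t * Real.logb 2 (pr μ Y t.2)
      = ∑ t : α × β, (pr μ (fun ω => (X ω, Y ω)) t * Real.logb 2 (pr μ Y t.2)
        - pr μ (fun ω => (X ω, Y ω)) t *
          Real.logb 2 (pr μ (fun ω => (X ω, Y ω)) t)) from by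
    rw [Finset.sum_sub_distrib]; ring]
  refine Finset.sum_nonneg fun t _ => ?_
  have hp0 : 0 ≤ pr μ (fun ω => (X ω, Y ω)) t := pr_nonneg hμ _ t
  have hple : pr μ (fun ω => (X ω, Y ω)) t ≤ pr μ Y t.2 :=
    pr_le_pr_comp hμ (fun ω => (X ω, Y ω)) Prod.snd t
  rcases eq_or_lt_of_le hp0 with h | h
  · rw [← h]; simp
  · have : Real.logb 2 (pr μ (fun ω => (X ω, Y ω)) t) ≤
        Real.logb 2 (pr μ Y t.2) :=
      Real.logb_le_logb_of_le (by norm_num) h hple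
    nlinarith

lemma gibbs_term {p a b c : ℝ} (hp : 0 ≤ p) (ha : p ≤ a) (hb : p ≤ b) (hc : p ≤ c)
    (ha0 : 0 ≤ a) (hb0 : 0 ≤ b) (hc0 : 0 ≤ c) :
    (p - a * b / c) / Real.log 2
      ≤ p * (Real.logb 2 p + Real.logb 2 c - Real.logb 2 a - Real.logb 2 b) := by
  have hl2 : (0:ℝ) < Real.log 2 := Real.log_pos one_lt_two
  rcases eq_or_lt_of_le hp with h | hp0
  · rw [← h]
    have hG : 0 ≤ a * b / c := by positivity
    have h1 : (0 - a * b / c) / Real.log 2 ≤ 0 :=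
      div_nonpos_of_nonpos_of_nonneg (by linarith) hl2.le
    calc (0 - a * b / c) / Real.log 2 ≤ 0 := h1
      _ = 0 * (Real.logb 2 0 + Real.logb 2 c - Real.logb 2 a - Real.logb 2 b) :=
        (zero_mul _).symm
  · have ha' : 0 < a := lt_of_lt_of_le hp0 ha
    have hb' : 0 < b := lt_of_lt_of_le hp0 hb
    have hc' : 0 < c := lt_of_lt_of_le hp0 hc
    have hlog := Real.log_le_sub_one_of_pos (show 0 < a * b / c / p by positivity)
    have hinv : (a * b / c / p)⁻¹ = p * c / (a * b) := by
      field_simp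
    have hloginv : Real.log (p * c / (a * b)) = -Real.log (a * b / c / p) := by
      rw [← Real.log_inv, hinv]
    have h1 : 1 - a * b / c / p ≤ Real.log (p * c / (a * b)) := by
      rw [hloginv]; linarith
    have e : Real.logb 2 p + Real.logb 2 c - Real.logb 2 a - Real.logb 2 b
        = Real.log (p * c / (a * b)) / Real.log 2 := by
      rw [Real.log_div (show (0:ℝ) < p * c by positivity).ne'
          (show (0:ℝ) < a * b by positivity).ne',
        Real.log_mul hp0.ne' hc'.ne', Real.log_mul ha'.ne' hb'.ne',
        Real.logb, Real.logb, Real.logb, Real.logb]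
      ring
    rw [e]
    have h2 : p * (1 - a * b / c / p) ≤ p * Real.log (p * c / (a * b)) :=
      mul_le_mul_of_nonneg_left h1 hp
    have h3 : p * (1 - a * b / c / p) = p - a * b / c := by
      field_simp
    calc (p - a * b / c) / Real.log 2
        ≤ p * Real.log (p * c / (a * b)) / Real.log 2 :=
          (div_le_div_iff_of_pos_right hl2).mpr (by linarith)
      _ = p * (Real.log (p * c / (a * b)) / Real.log 2) := by ring

lemma pr_snd_marg (X : Ω → α) (Z : Ω → γ) (c : γ) :
    pr μ Z c = ∑ a, pr μ (fun ω => (X ω, Z ω)) (a, c) := by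
  unfold pr
  rw [Finset.sum_comm]
  refine Finset.sum_congr rfl fun ω _ => ?_
  simp [Prod.ext_iff, ite_and]

lemma mi_nonneg (hμ : IsPMF μ) (X : Ω → α) (Y : Ω → β) (Z : Ω → γ) :
    0 ≤ mi μ X Y Z := by
  have hl2 : (0:ℝ) < Real.log 2 := Real.log_pos one_lt_two
  have e1 : ent μ (fun ω => (X ω, Z ω)) = -∑ t : α × β × γ,
      pr μ (fun ω => (X ω, Y ω, Z ω)) t *
      Real.logb 2 (pr μ (fun ω => (X ω, Z ω)) (t.1, t.2.2)) :=
    ent_comp_eq (fun ω => (X ω, Y ω, Z ω)) (fun t => (t.1, t.2.2))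
  have e2 : ent μ (fun ω => (Y ω, Z ω)) = -∑ t : α × β × γ,
      pr μ (fun ω => (X ω, Y ω, Z ω)) t *
      Real.logb 2 (pr μ (fun ω => (Y ω, Z ω)) (t.2.1, t.2.2)) :=
    ent_comp_eq (fun ω => (X ω, Y ω, Z ω)) (fun t => (t.2.1, t.2.2))
  have e3 : ent μ Z = -∑ t : α × β × γ,
      pr μ (fun ω => (X ω, Y ω, Z ω)) t * Real.logb 2 (pr μ Z t.2.2) :=
    ent_comp_eq (fun ω => (X ω, Y ω, Z ω)) (fun t => t.2.2)
  have e4 : ent μ (fun ω => ((X ω, Y ω), Z ω))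
      = ent μ (fun ω => (X ω, Y ω, Z ω)) := ent_pair_assoc X Y Z
  have e5 : ent μ (fun ω => (X ω, Y ω, Z ω)) = -∑ t : α × β × γ,
      pr μ (fun ω => (X ω, Y ω, Z ω)) t *
      Real.logb 2 (pr μ (fun ω => (X ω, Y ω, Z ω)) t) := rfl
  -- sum of the auxiliary (product) measure is at most 1
  have hGsum : ∑ t : α × β × γ,
      pr μ (fun ω => (X ω, Z ω)) (t.1, t.2.2) *
        pr μ (fun ω => (Y ω, Z ω)) (t.2.1, t.2.2) / pr μ Z t.2.2 ≤ 1 := by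
    have hflat : ∑ t : α × β × γ,
        pr μ (fun ω => (X ω, Z ω)) (t.1, t.2.2) *
          pr μ (fun ω => (Y ω, Z ω)) (t.2.1, t.2.2) / pr μ Z t.2.2
        = ∑ c : γ, ∑ a : α, ∑ b : β,
          pr μ (fun ω => (X ω, Z ω)) (a, c) *
            pr μ (fun ω => (Y ω, Z ω)) (b, c) / pr μ Z c := by
      rw [Fintype.sum_prod_type]
      calc ∑ a : α, ∑ q : β × γ,
            pr μ (fun ω => (X ω, Z ω)) (a, q.2) *
              pr μ (fun ω => (Y ω, Z ω)) (q.1, q.2) / pr μ Z q.2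
          = ∑ a : α, ∑ b : β, ∑ c : γ,
            pr μ (fun ω => (X ω, Z ω)) (a, c) *
              pr μ (fun ω => (Y ω, Z ω)) (b, c) / pr μ Z c := by
            exact Finset.sum_congr rfl fun a _ => Fintype.sum_prod_type _
        _ = ∑ a : α, ∑ c : γ, ∑ b : β,
            pr μ (fun ω => (X ω, Z ω)) (a, c) *
              pr μ (fun ω => (Y ω, Z ω)) (b, c) / pr μ Z c :=
            Finset.sum_congr rfl fun a _ => Finset.sum_comm
        _ = ∑ c : γ, ∑ a : α, ∑ b : β,
            pr μ (fun ω => (X ω, Z ω)) (a, c) *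
              pr μ (fun ω => (Y ω, Z ω)) (b, c) / pr μ Z c :=
            Finset.sum_comm
    rw [hflat]
    have hc_bound : ∀ c : γ, ∑ a : α, ∑ b : β,
        pr μ (fun ω => (X ω, Z ω)) (a, c) *
          pr μ (fun ω => (Y ω, Z ω)) (b, c) / pr μ Z c ≤ pr μ Z c := by
      intro c
      have hfact : ∑ a : α, ∑ b : β,
          pr μ (fun ω => (X ω, Z ω)) (a, c) *
            pr μ (fun ω => (Y ω, Z ω)) (b, c) / pr μ Z c
          = (∑ a : α, pr μ (fun ω => (X ω, Z ω)) (a, c)) *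
            (∑ b : β, pr μ (fun ω => (Y ω, Z ω)) (b, c)) / pr μ Z c := by
        calc ∑ a : α, ∑ b : β,
            pr μ (fun ω => (X ω, Z ω)) (a, c) *
              pr μ (fun ω => (Y ω, Z ω)) (b, c) / pr μ Z c
            = ∑ a : α, pr μ (fun ω => (X ω, Z ω)) (a, c) *
                (∑ b : β, pr μ (fun ω => (Y ω, Z ω)) (b, c)) / pr μ Z c :=
              Finset.sum_congr rfl fun a _ => by
                rw [← Finset.sum_div, ← Finset.mul_sum]
          _ = (∑ a : α, pr μ (fun ω => (X ω, Z ω)) (a, c)) *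
                (∑ b : β, pr μ (fun ω => (Y ω, Z ω)) (b, c)) / pr μ Z c := by
              rw [← Finset.sum_div, ← Finset.sum_mul]
      rw [hfact, ← pr_snd_marg X Z c, ← pr_snd_marg Y Z c]
      rcases eq_or_ne (pr μ Z c) 0 with h | h
      · simp [h]
      · rw [mul_div_assoc, div_self h, mul_one]
    calc ∑ c : γ, ∑ a : α, ∑ b : β,
          pr μ (fun ω => (X ω, Z ω)) (a, c) *
            pr μ (fun ω => (Y ω, Z ω)) (b, c) / pr μ Z c
        ≤ ∑ c : γ, pr μ Z c := Finset.sum_le_sum fun c _ => hc_bound c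
      _ = 1 := sum_pr hμ Z
  -- termwise Gibbs bound
  have key : ∀ t : α × β × γ,
      (pr μ (fun ω => (X ω, Y ω, Z ω)) t -
        pr μ (fun ω => (X ω, Z ω)) (t.1, t.2.2) *
          pr μ (fun ω => (Y ω, Z ω)) (t.2.1, t.2.2) / pr μ Z t.2.2) /
        Real.log 2
      ≤ pr μ (fun ω => (X ω, Y ω, Z ω)) t *
        (Real.logb 2 (pr μ (fun ω => (X ω, Y ω, Z ω)) t) +
          Real.logb 2 (pr μ Z t.2.2) -
          Real.logb 2 (pr μ (fun ω => (X ω, Z ω)) (t.1, t.2.2)) -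
          Real.logb 2 (pr μ (fun ω => (Y ω, Z ω)) (t.2.1, t.2.2))) := by
    intro t
    exact gibbs_term (pr_nonneg hμ _ t)
      (pr_le_pr_comp hμ (fun ω => (X ω, Y ω, Z ω)) (fun t => (t.1, t.2.2)) t)
      (pr_le_pr_comp hμ (fun ω => (X ω, Y ω, Z ω)) (fun t => (t.2.1, t.2.2)) t)
      (pr_le_pr_comp hμ (fun ω => (X ω, Y ω, Z ω)) (fun t => t.2.2) t)
      (pr_nonneg hμ _ _) (pr_nonneg hμ _ _) (pr_nonneg hμ _ _)
  have hsum_p : ∑ t : α × β × γ, pr μ (fun ω => (X ω, Y ω, Z ω)) t = 1 :=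
    sum_pr hμ _
  have big : 0 ≤ ∑ t : α × β × γ,
      pr μ (fun ω => (X ω, Y ω, Z ω)) t *
        (Real.logb 2 (pr μ (fun ω => (X ω, Y ω, Z ω)) t) +
          Real.logb 2 (pr μ Z t.2.2) -
          Real.logb 2 (pr μ (fun ω => (X ω, Z ω)) (t.1, t.2.2)) -
          Real.logb 2 (pr μ (fun ω => (Y ω, Z ω)) (t.2.1, t.2.2))) := by
    calc (0:ℝ) ≤ (∑ t : α × β × γ, pr μ (fun ω => (X ω, Y ω, Z ω)) t -
          ∑ t : α × β × γ,
            pr μ (fun ω => (X ω, Z ω)) (t.1, t.2.2) *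
              pr μ (fun ω => (Y ω, Z ω)) (t.2.1, t.2.2) / pr μ Z t.2.2) /
          Real.log 2 := by
          apply div_nonneg _ hl2.le
          rw [hsum_p]; linarith
      _ = ∑ t : α × β × γ,
          (pr μ (fun ω => (X ω, Y ω, Z ω)) t -
            pr μ (fun ω => (X ω, Z ω)) (t.1, t.2.2) *
              pr μ (fun ω => (Y ω, Z ω)) (t.2.1, t.2.2) / pr μ Z t.2.2) /
            Real.log 2 := by
          rw [← Finset.sum_sub_distrib, Finset.sum_div]
      _ ≤ _ := Finset.sum_le_sum fun t _ => key t
  have hsplit : ∑ t : α × β × γ,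
      pr μ (fun ω => (X ω, Y ω, Z ω)) t *
        (Real.logb 2 (pr μ (fun ω => (X ω, Y ω, Z ω)) t) +
          Real.logb 2 (pr μ Z t.2.2) -
          Real.logb 2 (pr μ (fun ω => (X ω, Z ω)) (t.1, t.2.2)) -
          Real.logb 2 (pr μ (fun ω => (Y ω, Z ω)) (t.2.1, t.2.2)))
      = (∑ t : α × β × γ, pr μ (fun ω => (X ω, Y ω, Z ω)) t *
          Real.logb 2 (pr μ (fun ω => (X ω, Y ω, Z ω)) t))
        + (∑ t : α × β × γ, pr μ (fun ω => (X ω, Y ω, Z ω)) t *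
          Real.logb 2 (pr μ Z t.2.2))
        - (∑ t : α × β × γ, pr μ (fun ω => (X ω, Y ω, Z ω)) t *
          Real.logb 2 (pr μ (fun ω => (X ω, Z ω)) (t.1, t.2.2)))
        - (∑ t : α × β × γ, pr μ (fun ω => (X ω, Y ω, Z ω)) t *
          Real.logb 2 (pr μ (fun ω => (Y ω, Z ω)) (t.2.1, t.2.2))) := by
    rw [← Finset.sum_add_distrib, ← Finset.sum_sub_distrib,
      ← Finset.sum_sub_distrib]
    exact Finset.sum_congr rfl fun t _ => by ring
  simp only [mi, centr]
  rw [e4, e1, e2, e3, e5]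
  linarith [big, hsplit]

lemma cond_reduce (hμ : IsPMF μ) (X : Ω → α) (Y : Ω → β) (Z : Ω → γ) :
    centr μ X (fun ω => (Y ω, Z ω)) ≤ centr μ X Z := by
  have h := mi_nonneg hμ X Y Z
  have hc := chain (μ := μ) X Y Z
  simp only [mi] at h
  linarith

lemma centr_le_ent (hμ : IsPMF μ) (X : Ω → α) (Y : Ω → β) :
    centr μ X Y ≤ ent μ X := by
  have h := cond_reduce hμ X Y (fun _ => ())
  have h1 : centr μ X (fun ω => (Y ω, ())) = centr μ X Y :=
    centr_comp_right (e := fun b : β => (b, ()))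
      (by intro q q' h; simpa [Prod.ext_iff] using h) X Y
  have h2 : centr μ X (fun _ : Ω => ()) = ent μ X := by
    unfold centr
    have hu : ent μ (fun _ : Ω => ()) = 0 := by
      unfold ent pr
      simp [hμ.sum_one]
    have hx : ent μ (fun ω => (X ω, ())) = ent μ X :=
      ent_comp_inj X (g := fun a => (a, ()))
        (by intro q q' h; simpa [Prod.ext_iff] using h)
    rw [hu, hx]; ring
  linarith


/-- multi-terminal source coding lower bound. With
`sA = s_{3k-1}, sB = s_{3k}, sC = s_{3k+1}, sD = s_{3k+2}` and encoder outputs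
`f₁, f₂`, Fano-type decodability gives
`H(f₁,f₂) ≥ H(sD | sA) + H(sC | sD, sB) − 2nε`. -/
theorem multiterminal_sum_rate_lower_bound
    {S A1 A2 : Type} [Fintype S] [DecidableEq S]
    [Fintype A1] [DecidableEq A1] [Fintype A2] [DecidableEq A2]
    (μ : Ω → ℝ) (hμ : IsPMF μ) (n ε : ℝ) (hn : 0 < n) (hε : 0 ≤ ε)
    (f1 : Ω → A1) (f2 : Ω → A2) (sA sB sC sD : Ω → S)
    (hM1 : centr μ (fun ω => (sC ω, sD ω)) (fun ω => (sA ω, sB ω))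
        = centr μ (fun ω => (sC ω, sD ω)) sB)
    (hM2 : centr μ sD (fun ω => (sA ω, sB ω, sC ω)) = centr μ sD sC)
    (hFano2 : centr μ sD (fun ω => (f1 ω, f2 ω, sA ω)) ≤ n * ε)
    (hFano1 : centr μ sC (fun ω => (f1 ω, sB ω)) ≤ n * ε) :
    ent μ (fun ω => (f1 ω, f2 ω))
      ≥ centr μ sD sA + centr μ sC (fun ω => (sD ω, sB ω)) - 2 * n * ε := by
  -- Step 0: H(f1,f2) ≥ H(f1,f2 | sA)
  have h0 : centr μ (fun ω => (f1 ω, f2 ω)) sA ≤ ent μ (fun ω => (f1 ω, f2 ω)) :=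
    centr_le_ent hμ _ _
  -- Step A: H(f1,f2|sA) = H(f1,f2|sD,sA) + H(sD|sA) − H(sD|f1,f2,sA)
  have hA1 : centr μ (fun ω => (sD ω, (f1 ω, f2 ω))) sA
      = centr μ sD (fun ω => ((f1 ω, f2 ω), sA ω))
        + centr μ (fun ω => (f1 ω, f2 ω)) sA :=
    chain sD (fun ω => (f1 ω, f2 ω)) sA
  have hA1' : centr μ sD (fun ω => (f1 ω, f2 ω, sA ω))
      = centr μ sD (fun ω => ((f1 ω, f2 ω), sA ω)) :=
    centr_comp_right (e := fun p : (A1 × A2) × S => (p.1.1, (p.1.2, p.2)))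
      (by intro q q' h; simp only [Prod.ext_iff] at h ⊢; tauto) sD
      (fun ω => ((f1 ω, f2 ω), sA ω))
  have hA2 : centr μ (fun ω => ((f1 ω, f2 ω), sD ω)) sA
      = centr μ (fun ω => (f1 ω, f2 ω)) (fun ω => (sD ω, sA ω))
        + centr μ sD sA :=
    chain (fun ω => (f1 ω, f2 ω)) sD sA
  have hA3 : centr μ (fun ω => (sD ω, (f1 ω, f2 ω))) sA
      = centr μ (fun ω => ((f1 ω, f2 ω), sD ω)) sA :=
    centr_comp_left (g := fun p : (A1 × A2) × S => (p.2, p.1))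
      (by intro q q' h; simp only [Prod.ext_iff] at h ⊢; tauto)
      (fun ω => ((f1 ω, f2 ω), sD ω)) sA
  -- Step B: H(f1,f2|sD,sA) ≥ H(f1|sD,sA)
  have hB1 : centr μ (fun ω => (f2 ω, f1 ω)) (fun ω => (sD ω, sA ω))
      = centr μ f2 (fun ω => (f1 ω, (sD ω, sA ω)))
        + centr μ f1 (fun ω => (sD ω, sA ω)) :=
    chain f2 f1 (fun ω => (sD ω, sA ω))
  have hB2 : centr μ (fun ω => (f2 ω, f1 ω)) (fun ω => (sD ω, sA ω))
      = centr μ (fun ω => (f1 ω, f2 ω)) (fun ω => (sD ω, sA ω)) :=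
    centr_comp_left (g := fun p : A1 × A2 => (p.2, p.1))
      (by intro q q' h; simp only [Prod.ext_iff] at h ⊢; tauto)
      (fun ω => (f1 ω, f2 ω)) (fun ω => (sD ω, sA ω))
  have hB3 : 0 ≤ centr μ f2 (fun ω => (f1 ω, (sD ω, sA ω))) :=
    centr_nonneg hμ _ _
  -- Step C: H(f1|sD,sA) ≥ H(f1|sB,sD,sA)
  have hC1 : centr μ f1 (fun ω => (sB ω, sD ω, sA ω))
      ≤ centr μ f1 (fun ω => (sD ω, sA ω)) :=
    cond_reduce hμ f1 sB (fun ω => (sD ω, sA ω))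
  -- Step D: H(f1|W3) ≥ H(sC|W3) − H(sC|f1,W3)   where W3 = (sB,sD,sA)
  have hD1 : centr μ (fun ω => (sC ω, f1 ω)) (fun ω => (sB ω, sD ω, sA ω))
      = centr μ sC (fun ω => (f1 ω, (sB ω, sD ω, sA ω)))
        + centr μ f1 (fun ω => (sB ω, sD ω, sA ω)) :=
    chain sC f1 (fun ω => (sB ω, sD ω, sA ω))
  have hD2 : centr μ (fun ω => (f1 ω, sC ω)) (fun ω => (sB ω, sD ω, sA ω))
      = centr μ f1 (fun ω => (sC ω, (sB ω, sD ω, sA ω)))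
        + centr μ sC (fun ω => (sB ω, sD ω, sA ω)) :=
    chain f1 sC (fun ω => (sB ω, sD ω, sA ω))
  have hD3 : centr μ (fun ω => (sC ω, f1 ω)) (fun ω => (sB ω, sD ω, sA ω))
      = centr μ (fun ω => (f1 ω, sC ω)) (fun ω => (sB ω, sD ω, sA ω)) :=
    centr_comp_left (g := fun p : A1 × S => (p.2, p.1))
      (by intro q q' h; simp only [Prod.ext_iff] at h ⊢; tauto)
      (fun ω => (f1 ω, sC ω)) (fun ω => (sB ω, sD ω, sA ω))
  have hD4 : 0 ≤ centr μ f1 (fun ω => (sC ω, (sB ω, sD ω, sA ω))) :=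
    centr_nonneg hμ _ _
  -- Step E: H(sC|f1,W3) ≤ H(sC|f1,sB) ≤ nε
  have hE1 : centr μ sC (fun ω => ((sD ω, sA ω), (f1 ω, sB ω)))
      ≤ centr μ sC (fun ω => (f1 ω, sB ω)) :=
    cond_reduce hμ sC (fun ω => (sD ω, sA ω)) (fun ω => (f1 ω, sB ω))
  have hE2 : centr μ sC (fun ω => ((sD ω, sA ω), (f1 ω, sB ω)))
      = centr μ sC (fun ω => (f1 ω, (sB ω, sD ω, sA ω))) := by
    refine centr_comp_right
      (e := fun q : A1 × (S × S × S) => ((q.2.2.1, q.2.2.2), (q.1, q.2.1)))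
      ?_ sC (fun ω => (f1 ω, (sB ω, sD ω, sA ω)))
    intro q q' h; simp only [Prod.ext_iff] at h ⊢; tauto
  -- Step F: Markov gives H(sC | sB,sD,sA) ≥ H(sC | sD,sB)
  have hF1 : centr μ (fun ω => (sC ω, sD ω)) (fun ω => (sA ω, sB ω))
      = centr μ sC (fun ω => (sD ω, (sA ω, sB ω)))
        + centr μ sD (fun ω => (sA ω, sB ω)) :=
    chain sC sD (fun ω => (sA ω, sB ω))
  have hF2 : centr μ (fun ω => (sC ω, sD ω)) sB
      = centr μ sC (fun ω => (sD ω, sB ω)) + centr μ sD sB :=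
    chain sC sD sB
  have hF3 : centr μ sD (fun ω => (sA ω, sB ω)) ≤ centr μ sD sB :=
    cond_reduce hμ sD sA sB
  have hF4 : centr μ sC (fun ω => (sB ω, sD ω, sA ω))
      = centr μ sC (fun ω => (sD ω, (sA ω, sB ω))) := by
    refine (centr_comp_right
      (e := fun q : S × S × S => (q.2.1, (q.2.2, q.1)))
      ?_ sC (fun ω => (sB ω, sD ω, sA ω))).symm
    intro q q' h; simp only [Prod.ext_iff] at h ⊢; tauto
  linarith
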